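/- For every natural number n ≥ 3, the broadcast domination number of the cycle graph C_n equals ⌈n/3⌉. -/

import Mathlib

open SimpleGraph Finset

/-- A dominating broadcast on `G`: every vertex is within distance `f u` of some
vertex `u` with `f u ≥ 1` (distances are measured by the graph metric `G.dist`). -/
def IsDominatingBroadcast {V : Type*} (G : SimpleGraph V) (f : V → ℕ) : Prop :=
  ∀ v : V, ∃ u : V, 1 ≤ f u ∧ G.dist u v ≤ f u

/-- The broadcast domination number of `G`: the minimum cost (sum of strengths)
of a dominating broadcast on `G`. -/
noncomputable def gammaB (V : Type*) [Fintype V] (G : SimpleGraph V) : ℕ :=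
  sInf {c : ℕ | ∃ f : V → ℕ, IsDominatingBroadcast G f ∧ ∑ v, f v = c}

/- ### Auxiliary lemmas -/

lemma fin_val_one_aux {n : ℕ} [NeZero n] (hn : 2 ≤ n) : (1 : Fin n).val = 1 := by
  rw [Fin.val_one']
  exact Nat.mod_eq_of_lt hn

lemma fin_sub_one_val {n : ℕ} [NeZero n] (hn : 2 ≤ n) (v : Fin n) (h1 : 1 ≤ v.val) :
    (v - 1).val = v.val - 1 := by
  rw [Fin.sub_def, fin_val_one_aux hn]
  have hv : v.val < n := v.isLt
  have heq : n - 1 + v.val = (v.val - 1) + n := by omega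
  rw [heq]
  show (v.val - 1 + n) % n = v.val - 1
  rw [Nat.add_mod_right]
  exact Nat.mod_eq_of_lt (by omega)

open Fin.CommRing in
/-- Along any walk in the cycle graph, the endpoint differs from the start by a
shift whose absolute value is at most the length of the walk. -/
lemma cycle_walk_shift {n : ℕ} [NeZero n] (hn : 2 ≤ n) {u v : Fin n}
    (w : (SimpleGraph.cycleGraph n).Walk u v) :
    ∃ s : ℤ, s.natAbs ≤ w.length ∧ v = u + (s : Fin n) := by
  induction w with
  | nil => exact ⟨0, by simp⟩
  | @cons a b c h p ih =>
    obtain ⟨s, hs, hv⟩ := ih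
    rw [SimpleGraph.cycleGraph_adj'] at h
    rcases h with h | h
    · -- (a - b).val = 1, so b = a - 1
      have hab : a - b = 1 := by
        apply Fin.ext; rw [h, fin_val_one_aux hn]
      have hb : b = a - 1 := by
        have := sub_eq_iff_eq_add.mp hab
        rw [this]; ring
      refine ⟨s - 1, ?_, ?_⟩
      · simp only [SimpleGraph.Walk.length_cons]; omega
      · rw [hv, hb]; push_cast; ring
    · -- (b - a).val = 1, so b = a + 1
      have hab : b - a = 1 := by
        apply Fin.ext; rw [h, fin_val_one_aux hn]
      have hb : b = a + 1 := by
        have := sub_eq_iff_eq_add.mp hab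
        rw [this]; ring
      refine ⟨s + 1, ?_, ?_⟩
      · simp only [SimpleGraph.Walk.length_cons]; omega
      · rw [hv, hb]; push_cast; ring

open Fin.CommRing in
/-- The ball of radius `k` around a vertex in the cycle graph has at most
`2k + 1` elements. -/
lemma cycle_ball_card {n : ℕ} (hn : 2 ≤ n) (u : Fin n) (k : ℕ) :
    (Finset.univ.filter fun v => (SimpleGraph.cycleGraph n).dist u v ≤ k).card
      ≤ 2 * k + 1 := by
  haveI : NeZero n := ⟨by omega⟩
  classical
  have hsub : (Finset.univ.filter fun v => (SimpleGraph.cycleGraph n).dist u v ≤ k)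
      ⊆ (Finset.range (2 * k + 1)).image (fun j : ℕ => u + (((j : ℤ) - k : ℤ) : Fin n)) := by
    intro v hv
    rw [Finset.mem_filter] at hv
    have hreach : (SimpleGraph.cycleGraph n).Reachable u v :=
      SimpleGraph.cycleGraph_preconnected u v
    obtain ⟨w, hw⟩ := hreach.exists_walk_length_eq_dist
    obtain ⟨s, hs, hv'⟩ := cycle_walk_shift hn w
    rw [hw] at hs
    have hsk : s.natAbs ≤ k := le_trans hs hv.2
    refine Finset.mem_image.mpr ⟨(s + k).toNat, ?_, ?_⟩
    · rw [Finset.mem_range]; omega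
    · have : (((s + k).toNat : ℤ) - k : ℤ) = s := by omega
      rw [this, ← hv']
  calc (Finset.univ.filter fun v => (SimpleGraph.cycleGraph n).dist u v ≤ k).card
      ≤ ((Finset.range (2 * k + 1)).image
          (fun j : ℕ => u + (((j : ℤ) - k : ℤ) : Fin n))).card :=
        Finset.card_le_card hsub
    _ ≤ (Finset.range (2 * k + 1)).card := Finset.card_image_le
    _ = 2 * k + 1 := Finset.card_range _

/-- Lower bound: any dominating broadcast on the cycle has cost at least `n/3`. -/
lemma cycle_lower_bound {n : ℕ} (hn : 3 ≤ n) (f : Fin n → ℕ)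
    (hf : IsDominatingBroadcast (SimpleGraph.cycleGraph n) f) :
    n ≤ 3 * ∑ v, f v := by
  classical
  set S : Finset (Fin n) := Finset.univ.filter fun u => 1 ≤ f u with hS
  have hcover : (Finset.univ : Finset (Fin n)) ⊆
      S.biUnion (fun u => Finset.univ.filter
        fun v => (SimpleGraph.cycleGraph n).dist u v ≤ f u) := by
    intro v _
    obtain ⟨u, h1, h2⟩ := hf v
    refine Finset.mem_biUnion.mpr ⟨u, ?_, ?_⟩
    · simp [hS, h1]
    · simp [h2]
  have h1 : n ≤ (S.biUnion (fun u => Finset.univ.filter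
      fun v => (SimpleGraph.cycleGraph n).dist u v ≤ f u)).card := by
    have := Finset.card_le_card hcover
    simpa using this
  have h2 : (S.biUnion (fun u => Finset.univ.filter
      fun v => (SimpleGraph.cycleGraph n).dist u v ≤ f u)).card
      ≤ ∑ u ∈ S, (2 * f u + 1) := by
    refine le_trans (Finset.card_biUnion_le) ?_
    exact Finset.sum_le_sum fun u _ => cycle_ball_card (by omega) u (f u)
  have h3 : ∑ u ∈ S, (2 * f u + 1) ≤ ∑ u ∈ S, 3 * f u := by
    refine Finset.sum_le_sum fun u hu => ?_
    have : 1 ≤ f u := by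
      rw [hS] at hu; simpa using hu
    omega
  have h4 : ∑ u ∈ S, 3 * f u ≤ ∑ u, 3 * f u :=
    Finset.sum_le_sum_of_subset (Finset.filter_subset _ _)
  have h5 : ∑ u, 3 * f u = 3 * ∑ v, f v := by
    rw [Finset.mul_sum]
  omega

/-- Adjacent vertices in the cycle graph: `u` and `u + 1`. -/
lemma cycle_adj_add_one {n : ℕ} (hn : 2 ≤ n) [NeZero n] (u : Fin n) :
    (SimpleGraph.cycleGraph n).Adj u (u + 1) := by
  rw [SimpleGraph.cycleGraph_adj']
  right
  rw [add_sub_cancel_left, fin_val_one_aux hn]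

lemma count_multiples_three (n : ℕ) :
    ((Finset.range n).filter fun i => 3 ∣ i).card = (n + 2) / 3 := by
  induction n with
  | zero => simp
  | succ m ih =>
    rw [Finset.range_add_one, Finset.filter_insert]
    by_cases h : 3 ∣ m
    · rw [if_pos h, Finset.card_insert_of_notMem (by simp)]
      omega
    · rw [if_neg h, ih]
      omega

lemma ceil_eq_div (n : ℕ) : ⌈(n : ℚ) / 3⌉₊ = (n + 2) / 3 := by
  apply le_antisymm
  · rw [Nat.ceil_le, div_le_iff₀ (by norm_num)]
    have h : n ≤ ((n + 2) / 3) * 3 := by omega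
    exact_mod_cast h
  · have h := Nat.le_ceil ((n : ℚ) / 3)
    rw [div_le_iff₀ (by norm_num)] at h
    have h' : (n : ℚ) ≤ (⌈(n : ℚ) / 3⌉₊ : ℚ) * 3 := h
    have h'' : n ≤ ⌈(n : ℚ) / 3⌉₊ * 3 := by exact_mod_cast h'
    omega

/-- For every natural number `n ≥ 3`, the broadcast domination number of the
cycle graph `C_n` equals `⌈n/3⌉`. -/
theorem gammaB_cycleGraph (n : ℕ) (hn : 3 ≤ n) :
    gammaB (Fin n) (SimpleGraph.cycleGraph n) = ⌈(n : ℚ) / 3⌉₊ := by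
  classical
  haveI : NeZero n := ⟨by omega⟩
  rw [ceil_eq_div]
  -- the dominating broadcast: strength 1 on every multiple of 3
  set f : Fin n → ℕ := fun v => if 3 ∣ v.val then 1 else 0 with hfdef
  have hdom : IsDominatingBroadcast (SimpleGraph.cycleGraph n) f := by
    intro v
    have hv3 : v.val % 3 = 0 ∨ v.val % 3 = 1 ∨ v.val % 3 = 2 := by omega
    rcases hv3 with h | h | h
    · refine ⟨v, ?_, ?_⟩
      · simp [hfdef, Nat.dvd_of_mod_eq_zero h]
      · rw [SimpleGraph.dist_self]; omega
    · -- u = v - 1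
      refine ⟨v - 1, ?_, ?_⟩
      · have hval : (v - 1).val = v.val - 1 :=
          fin_sub_one_val (by omega) v (by omega)
        have : 3 ∣ (v - 1).val := by rw [hval]; omega
        simp [hfdef, this]
      · have hadj : (SimpleGraph.cycleGraph n).Adj (v - 1) v := by
          have := cycle_adj_add_one (n := n) (by omega) (v - 1)
          rwa [sub_add_cancel] at this
        have := SimpleGraph.dist_eq_one_iff_adj.mpr hadj
        have hval : (v - 1).val = v.val - 1 :=
          fin_sub_one_val (by omega) v (by omega)
        have h3 : 3 ∣ (v - 1).val := by rw [hval]; omega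
        simp [hfdef, h3, this]
    · -- u = v + 1
      refine ⟨v + 1, ?_, ?_⟩
      · have hval : (v + 1).val = (v.val + 1) % n := by
          rw [Fin.add_def, fin_val_one_aux (by omega)]
        have h3 : 3 ∣ (v + 1).val := by
          rw [hval]
          by_cases hc : v.val + 1 = n
          · rw [hc, Nat.mod_self]; exact dvd_zero 3
          · rw [Nat.mod_eq_of_lt (by have := v.isLt; omega)]; omega
        simp [hfdef, h3]
      · have hadj : (SimpleGraph.cycleGraph n).Adj (v + 1) v :=
          (cycle_adj_add_one (n := n) (by omega) v).symm
        have hd := SimpleGraph.dist_eq_one_iff_adj.mpr hadj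
        have hval : (v + 1).val = (v.val + 1) % n := by
          rw [Fin.add_def, fin_val_one_aux (by omega)]
        have h3 : 3 ∣ (v + 1).val := by
          rw [hval]
          by_cases hc : v.val + 1 = n
          · rw [hc, Nat.mod_self]; exact dvd_zero 3
          · rw [Nat.mod_eq_of_lt (by have := v.isLt; omega)]; omega
        simp [hfdef, h3, hd]
  have hsum : ∑ v, f v = (n + 2) / 3 := by
    rw [hfdef]
    rw [Fin.sum_univ_eq_sum_range (fun i => if 3 ∣ i then 1 else 0)]
    rw [Finset.sum_boole]
    rw [count_multiples_three]
    simp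
  have hmem : (n + 2) / 3 ∈ {c : ℕ | ∃ f : Fin n → ℕ,
      IsDominatingBroadcast (SimpleGraph.cycleGraph n) f ∧ ∑ v, f v = c} :=
    ⟨f, hdom, hsum⟩
  refine le_antisymm (Nat.sInf_le hmem) (le_csInf ⟨_, hmem⟩ ?_)
  rintro c ⟨g, hg, hgc⟩
  have := cycle_lower_bound hn g hg
  rw [hgc] at this
  omega
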